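/- Let K be a valued field, C ⊂ K a finite set, and λ ≥ 0 an element of the value group. Then two elements x, y ∈ K \ C lie in the same ball λ-next to C if and only if for every c ∈ C, v(x - y) > λ + v(x - c). -/

import Mathlib

/-- The open ball of (valuative) radius `μ` around `a` in a valued field, additive notation:
`B_{>μ}(a) = {x : v(x - a) > μ}`. -/
def vBall {K Γ : Type*} [Field K] [AddCommGroup Γ] [LinearOrder Γ] [IsOrderedAddMonoid Γ]
    (v : AddValuation K (WithTop Γ)) (μ : Γ) (a : K) : Set K :=
  {x : K | (μ : WithTop Γ) < v (x - a)}

/-- The ball `B_{>μ}(b)` is a ball 1-next to `C`: it is disjoint from `C` and maximal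
(w.r.t. inclusion) among open balls disjoint from `C`. -/
def IsOneNext {K Γ : Type*} [Field K] [AddCommGroup Γ] [LinearOrder Γ] [IsOrderedAddMonoid Γ]
    (v : AddValuation K (WithTop Γ)) (C : Set K) (b : K) (μ : Γ) : Prop :=
  vBall v μ b ∩ C = ∅ ∧
    ∀ (b' : K) (μ' : Γ), vBall v μ b ⊆ vBall v μ' b' → vBall v μ' b' ∩ C = ∅ →
      vBall v μ' b' = vBall v μ b

/-- `B` is a ball `λ`-next to `C`: an open ball contained in a ball `B₀` 1-next to `C`,
of radius `rad B₀ + λ`. -/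
def IsLambdaNext {K Γ : Type*} [Field K] [AddCommGroup Γ] [LinearOrder Γ] [IsOrderedAddMonoid Γ]
    (v : AddValuation K (WithTop Γ)) (C : Set K) (lam : Γ) (B : Set K) : Prop :=
  ∃ (b : K) (μ : Γ) (a : K), IsOneNext v C b μ ∧ a ∈ vBall v μ b ∧ B = vBall v (μ + lam) a

section Aux

variable {K Γ : Type*} [Field K] [AddCommGroup Γ] [LinearOrder Γ] [IsOrderedAddMonoid Γ]
  (v : AddValuation K (WithTop Γ))

lemma mem_vBall_self (μ : Γ) (a : K) : a ∈ vBall v μ a := by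
  simp only [vBall, Set.mem_setOf_eq, sub_self, AddValuation.map_zero]
  exact WithTop.coe_lt_top μ

lemma vBall_recenter {μ : Γ} {a b : K} (h : a ∈ vBall v μ b) :
    vBall v μ b = vBall v μ a := by
  ext z
  simp only [vBall, Set.mem_setOf_eq] at h ⊢
  constructor <;> intro hz
  · have : (μ : WithTop Γ) < v ((z - b) - (a - b)) :=
      lt_of_lt_of_le (lt_min hz h) (AddValuation.map_sub v _ _)
    rwa [sub_sub_sub_cancel_right] at this
  · have : (μ : WithTop Γ) < v ((z - a) + (a - b)) :=
      lt_of_lt_of_le (lt_min hz h) (AddValuation.map_add v _ _)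
    rwa [sub_add_sub_cancel] at this

lemma vBall_mono {μ μ' : Γ} (h : μ' ≤ μ) (a : K) : vBall v μ a ⊆ vBall v μ' a :=
  fun z hz => lt_of_le_of_lt (WithTop.coe_le_coe.2 h) hz

lemma vBall_radius_le (hv : Function.Surjective v) {μ₁ μ₂ : Γ} {a : K}
    (h : vBall v μ₁ a ⊆ vBall v μ₂ a) : μ₂ ≤ μ₁ := by
  by_contra hlt
  push_neg at hlt
  obtain ⟨z, hz⟩ := hv (μ₂ : WithTop Γ)
  have hmem : a + z ∈ vBall v μ₁ a := by
    simp only [vBall, Set.mem_setOf_eq, add_sub_cancel_left, hz]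
    exact WithTop.coe_lt_coe.2 hlt
  have := h hmem
  simp only [vBall, Set.mem_setOf_eq, add_sub_cancel_left, hz] at this
  exact lt_irrefl _ this

lemma vBall_radius_eq (hv : Function.Surjective v) {μ₁ μ₂ : Γ} {a : K}
    (h : vBall v μ₁ a = vBall v μ₂ a) : μ₁ = μ₂ :=
  le_antisymm (vBall_radius_le v hv h.ge.subset) (vBall_radius_le v hv h.le.subset)

lemma exists_mu {C : Set K} (hCfin : C.Finite) (hCne : C.Nonempty) {x : K} (hx : x ∉ C) :
    ∃ μx : Γ, (∃ c₀ ∈ C, v (x - c₀) = (μx : WithTop Γ)) ∧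
      ∀ c ∈ C, v (x - c) ≤ (μx : WithTop Γ) := by
  obtain ⟨c₀, hc₀, hmax⟩ := Set.exists_max_image C (fun c => v (x - c)) hCfin hCne
  have hne : v (x - c₀) ≠ ⊤ := by
    rw [AddValuation.ne_top_iff, sub_ne_zero]
    rintro rfl; exact hx hc₀
  obtain ⟨μx, hμx⟩ := WithTop.ne_top_iff_exists.1 hne
  exact ⟨μx, ⟨c₀, hc₀, hμx.symm⟩, fun c hc => hμx ▸ hmax c hc⟩

lemma isOneNext_of_max (hv : Function.Surjective v) {C : Set K} {x : K} {μx : Γ}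
    (hattain : ∃ c₀ ∈ C, v (x - c₀) = (μx : WithTop Γ))
    (hmax : ∀ c ∈ C, v (x - c) ≤ (μx : WithTop Γ)) :
    IsOneNext v C x μx := by
  obtain ⟨c₀, hc₀, hc₀v⟩ := hattain
  constructor
  · ext c
    simp only [Set.mem_inter_iff, Set.mem_empty_iff_false, iff_false, not_and]
    intro hcB hcC
    simp only [vBall, Set.mem_setOf_eq] at hcB
    rw [AddValuation.map_sub_swap] at hcB
    exact absurd (hmax c hcC) (not_le.2 hcB)
  · intro b' μ' hsub hdisj
    have hx' : x ∈ vBall v μ' b' := hsub (mem_vBall_self v μx x)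
    rw [vBall_recenter v hx'] at hdisj hsub ⊢
    have hle : μx ≤ μ' := by
      by_contra hlt
      push_neg at hlt
      have hc₀mem : c₀ ∈ vBall v μ' x := by
        simp only [vBall, Set.mem_setOf_eq, AddValuation.map_sub_swap v c₀ x, hc₀v]
        exact WithTop.coe_lt_coe.2 hlt
      exact absurd hdisj (by
        rw [Set.eq_empty_iff_forall_notMem]
        push_neg
        exact ⟨c₀, hc₀mem, hc₀⟩)
    exact le_antisymm (vBall_mono v hle x) hsub

end Aux

/-- Let `K` be a valued field, `C ⊂ K` a finite nonempty set, `λ ≥ 0` in the value group.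
Two elements `x, y ∈ K \ C` lie in the same ball `λ`-next to `C` if and only if for every
`c ∈ C`, `v(x - y) > λ + v(x - c)`. -/
theorem stmt14 {K Γ : Type*} [Field K] [AddCommGroup Γ] [LinearOrder Γ] [IsOrderedAddMonoid Γ]
    (v : AddValuation K (WithTop Γ)) (hv : Function.Surjective v)
    (C : Set K) (hCfin : C.Finite) (hCne : C.Nonempty)
    (lam : Γ) (hlam : 0 ≤ lam) (x y : K) (hx : x ∉ C) (hy : y ∉ C) :
    (∃ B : Set K, IsLambdaNext v C lam B ∧ x ∈ B ∧ y ∈ B) ↔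
      ∀ c ∈ C, (lam : WithTop Γ) + v (x - c) < v (x - y) := by
  obtain ⟨μx, hattain, hmaxx⟩ := exists_mu v hCfin hCne hx
  obtain ⟨c₀, hc₀, hc₀v⟩ := hattain
  have hone : IsOneNext v C x μx := isOneNext_of_max v hv ⟨c₀, hc₀, hc₀v⟩ hmaxx
  constructor
  · rintro ⟨B, ⟨b, μ, a, honeb, ha, rfl⟩, hxB, hyB⟩
    -- the big ball contains x
    have hsub : vBall v (μ + lam) a ⊆ vBall v μ a :=
      vBall_mono v (le_add_of_nonneg_right hlam) a
    have hxa : x ∈ vBall v μ a := hsub hxB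
    have hba : vBall v μ b = vBall v μ x := by
      rw [vBall_recenter v ha, vBall_recenter v hxa]
    -- disjointness gives μx ≤ μ, hence vBall μ b ⊆ vBall μx x
    have hdisj : vBall v μ x ∩ C = ∅ := hba ▸ honeb.1
    have hμxle : μx ≤ μ := by
      by_contra hlt
      push_neg at hlt
      have : c₀ ∈ vBall v μ x := by
        simp only [vBall, Set.mem_setOf_eq, AddValuation.map_sub_swap v c₀ x, hc₀v]
        exact WithTop.coe_lt_coe.2 hlt
      rw [Set.eq_empty_iff_forall_notMem] at hdisj
      exact hdisj c₀ ⟨this, hc₀⟩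
    have heq : vBall v μx x = vBall v μ b :=
      honeb.2 x μx (hba ▸ vBall_mono v hμxle x) hone.1
    have hμeq : μx = μ := vBall_radius_eq v hv (heq.trans hba)
    -- now estimate
    intro c hc
    have hxc : v (x - c) ≤ (μx : WithTop Γ) := hmaxx c hc
    have hxy : ((μ + lam : Γ) : WithTop Γ) < v (x - y) := by
      have : ((μ + lam : Γ) : WithTop Γ) < v ((x - a) - (y - a)) :=
        lt_of_lt_of_le (lt_min hxB hyB) (AddValuation.map_sub v _ _)
      rwa [sub_sub_sub_cancel_right] at this
    calc (lam : WithTop Γ) + v (x - c) ≤ (lam : WithTop Γ) + (μx : WithTop Γ) :=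
          add_le_add_right hxc _
      _ = ((μ + lam : Γ) : WithTop Γ) := by
          rw [← hμeq, ← WithTop.coe_add, add_comm]
      _ < v (x - y) := hxy
  · intro h
    refine ⟨vBall v (μx + lam) x, ⟨x, μx, x, hone, mem_vBall_self v μx x, rfl⟩,
      mem_vBall_self v _ x, ?_⟩
    have := h c₀ hc₀
    rw [hc₀v, ← WithTop.coe_add] at this
    simp only [vBall, Set.mem_setOf_eq, AddValuation.map_sub_swap v y x]
    rwa [add_comm lam μx] at this
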